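/- arXiv:quant-ph/0512021 — 2 statements merged into one kernel-verified Lean document; each statement's English description precedes it below -/
import Mathlib

section
/- For any density matrix σ on (ℂ²)^{⊗m}, the average over y ∈ {1,2,3}^m of |tr(σ_y σ)| is at most (2/3)^{m/2}, i.e., 3^{-m} Σ_{y ∈ {1,2,3}^m} |tr(σ_y σ)| ≤ (2/3)^{m/2}. -/
open Matrix BigOperators
open scoped ComplexOrder

noncomputable def pauli : Fin 4 → Matrix (Fin 2) (Fin 2) ℂ
  | 0 => 1
  | 1 => !![0, 1; 1, 0]
  | 2 => !![0, -Complex.I; Complex.I, 0]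
  | 3 => !![1, 0; 0, -1]

/-- Tensor product σ_{y₁} ⊗ ⋯ ⊗ σ_{y_m} of Pauli matrices, as a matrix
indexed by `Fin m → Fin 2`. -/
noncomputable def pauliT {m : ℕ} (y : Fin m → Fin 4) :
    Matrix (Fin m → Fin 2) (Fin m → Fin 2) ℂ :=
  Matrix.of fun r c => ∏ i, pauli (y i) (r i) (c i)

lemma pauli_complete (a b c d : Fin 2) :
    ∑ k : Fin 4, pauli k a b * pauli k c d =
      if a = d ∧ b = c then 2 else 0 := by
  fin_cases a <;> fin_cases b <;> fin_cases c <;> fin_cases d <;>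
    simp [pauli, Fin.sum_univ_four, Matrix.one_apply, Complex.ext_iff] <;> ring

lemma trace_pauliT_mul {m : ℕ} (y : Fin m → Fin 4)
    (M : Matrix (Fin m → Fin 2) (Fin m → Fin 2) ℂ) :
    (pauliT y * M).trace
      = ∑ p : (Fin m → Fin 2) × (Fin m → Fin 2),
          (∏ i, pauli (y i) (p.1 i) (p.2 i)) * M p.2 p.1 := by
  rw [Fintype.sum_prod_type]
  simp [Matrix.trace, Matrix.diag, Matrix.mul_apply, pauliT]

lemma pauli_inner_sum {m : ℕ} (p q : (Fin m → Fin 2) × (Fin m → Fin 2)) :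
    ∑ y : Fin m → Fin 4,
        (∏ i, pauli (y i) (p.1 i) (p.2 i)) * (∏ i, pauli (y i) (q.1 i) (q.2 i))
      = if p.1 = q.2 ∧ p.2 = q.1 then (2 : ℂ) ^ m else 0 := by
  simp_rw [← Finset.prod_mul_distrib]
  rw [← Fintype.prod_sum fun i k => pauli k (p.1 i) (p.2 i) * pauli k (q.1 i) (q.2 i)]
  simp_rw [pauli_complete]
  by_cases h : p.1 = q.2 ∧ p.2 = q.1
  · rw [if_pos h]
    have : ∀ i : Fin m, (if p.1 i = q.2 i ∧ p.2 i = q.1 i then (2:ℂ) else 0) = 2 := by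
      intro i; rw [if_pos ⟨congrFun h.1 i, congrFun h.2 i⟩]
    simp [this]
  · rw [if_neg h]
    have hex : ∃ i, ¬(p.1 i = q.2 i ∧ p.2 i = q.1 i) := by
      by_contra hc
      push_neg at hc
      exact h ⟨funext fun i => (hc i).1, funext fun i => (hc i).2⟩
    obtain ⟨i, hi⟩ := hex
    exact Finset.prod_eq_zero (Finset.mem_univ i) (by rw [if_neg hi])

lemma pauli_key {m : ℕ} (A B : Matrix (Fin m → Fin 2) (Fin m → Fin 2) ℂ) :
    ∑ y : Fin m → Fin 4, (pauliT y * A).trace * (pauliT y * B).trace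
      = 2 ^ m * (A * B).trace := by
  have hy : ∀ y : Fin m → Fin 4,
      (pauliT y * A).trace * (pauliT y * B).trace
      = ∑ p : (Fin m → Fin 2) × (Fin m → Fin 2),
          ∑ q : (Fin m → Fin 2) × (Fin m → Fin 2),
          (A p.2 p.1 * B q.2 q.1) *
            ((∏ i, pauli (y i) (p.1 i) (p.2 i)) * (∏ i, pauli (y i) (q.1 i) (q.2 i))) := by
    intro y
    rw [trace_pauliT_mul, trace_pauliT_mul, Fintype.sum_mul_sum]
    exact Finset.sum_congr rfl fun p _ => Finset.sum_congr rfl fun q _ => by ring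
  simp_rw [hy]
  have hswap : (∑ y : Fin m → Fin 4, ∑ p : (Fin m → Fin 2) × (Fin m → Fin 2),
        ∑ q : (Fin m → Fin 2) × (Fin m → Fin 2),
        (A p.2 p.1 * B q.2 q.1) *
          ((∏ i, pauli (y i) (p.1 i) (p.2 i)) * (∏ i, pauli (y i) (q.1 i) (q.2 i))))
      = ∑ p : (Fin m → Fin 2) × (Fin m → Fin 2),
        ∑ q : (Fin m → Fin 2) × (Fin m → Fin 2), ∑ y : Fin m → Fin 4,
        (A p.2 p.1 * B q.2 q.1) *
          ((∏ i, pauli (y i) (p.1 i) (p.2 i)) * (∏ i, pauli (y i) (q.1 i) (q.2 i))) := by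
    rw [Finset.sum_comm]
    exact Finset.sum_congr rfl fun p _ => Finset.sum_comm
  rw [hswap]
  simp_rw [← Finset.mul_sum, pauli_inner_sum, mul_ite, mul_zero]
  have sel : ∀ p : (Fin m → Fin 2) × (Fin m → Fin 2),
      (∑ q : (Fin m → Fin 2) × (Fin m → Fin 2),
        if p.1 = q.2 ∧ p.2 = q.1 then (A p.2 p.1 * B q.2 q.1) * 2 ^ m else 0)
      = A p.2 p.1 * B p.1 p.2 * 2 ^ m := by
    intro p
    rw [Finset.sum_eq_single (p.2, p.1)]
    · simp
    · intro q _ hq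
      rw [if_neg]
      rintro ⟨h1, h2⟩
      exact hq (Prod.ext h2.symm h1.symm)
    · simp
  simp_rw [sel]
  rw [Fintype.sum_prod_type]
  simp only [Matrix.trace, Matrix.diag, Matrix.mul_apply, Finset.mul_sum, Finset.sum_mul]
  rw [Finset.sum_comm]
  refine Finset.sum_congr rfl fun r _ => Finset.sum_congr rfl fun c _ => by ring

lemma pauli_herm (k : Fin 4) : (pauli k)ᴴ = pauli k := by
  fin_cases k <;> simp [pauli] <;> ext a b <;> fin_cases a <;> fin_cases b <;>
    simp [Matrix.conjTranspose_apply, Complex.ext_iff]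

lemma pauliT_herm {m : ℕ} (y : Fin m → Fin 4) : (pauliT y)ᴴ = pauliT y := by
  ext r c
  have hp : ∀ (k : Fin 4) (a b : Fin 2), star (pauli k a b) = pauli k b a := by
    intro k a b
    fin_cases k <;> fin_cases a <;> fin_cases b <;>
      simp [pauli, Matrix.one_apply, Complex.ext_iff]
  simp only [Matrix.conjTranspose_apply, pauliT, Matrix.of_apply, star_prod, hp]

lemma trace_pauliT_real {m : ℕ} {σ : Matrix (Fin m → Fin 2) (Fin m → Fin 2) ℂ}
    (hσ : σ.IsHermitian) (y : Fin m → Fin 4) :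
    ((pauliT y * σ).trace.re : ℂ) = (pauliT y * σ).trace := by
  rw [Complex.conj_eq_iff_re.mp]
  have : ((pauliT y * σ)ᴴ).trace = star (pauliT y * σ).trace := Matrix.trace_conjTranspose _
  rw [Matrix.conjTranspose_mul, hσ.eq, pauliT_herm, Matrix.trace_mul_comm] at this
  exact this.symm

lemma trace_sq_le_one {n : Type*} [Fintype n] [DecidableEq n]
    {σ : Matrix n n ℂ} (hpos : σ.PosSemidef) (htr : σ.trace = 1) :
    (σ * σ).trace.re ≤ 1 := by
  have hH := hpos.1
  set U : Matrix n n ℂ := (hH.eigenvectorUnitary : Matrix n n ℂ) with hU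
  set D : Matrix n n ℂ := Matrix.diagonal (RCLike.ofReal ∘ hH.eigenvalues) with hD
  have hs : σ = U * D * star U := hH.spectral_theorem
  have hUU : star U * U = 1 := Matrix.mem_unitaryGroup_iff'.mp hH.eigenvectorUnitary.2
  have htrD : D.trace = 1 := by
    rw [← htr, hs, Matrix.trace_mul_cycle, hUU, Matrix.one_mul]
  have htrsq : (σ * σ).trace = (D * D).trace := by
    have h1 : σ * σ = U * (D * (D * star U)) := by
      rw [hs]
      calc U * D * star U * (U * D * star U)
          = U * (D * ((star U * U) * (D * star U))) := by
            simp only [Matrix.mul_assoc]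
        _ = U * (D * (D * star U)) := by rw [hUU, Matrix.one_mul]
    rw [h1, Matrix.trace_mul_comm]
    simp only [Matrix.mul_assoc]
    rw [hUU, Matrix.mul_one]
  -- eigenvalues sum to one and are nonneg
  have hsum : ∑ i, hH.eigenvalues i = 1 := by
    have : D.trace = ∑ i, (hH.eigenvalues i : ℂ) := by
      simp [hD, Matrix.trace_diagonal]
    rw [htrD] at this
    have := congrArg Complex.re this.symm
    simpa using this
  have hnn : ∀ i, 0 ≤ hH.eigenvalues i := hpos.eigenvalues_nonneg
  have hDD : (D * D).trace.re = ∑ i, (hH.eigenvalues i) ^ 2 := by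
    have : D * D = Matrix.diagonal fun i => ((hH.eigenvalues i : ℂ)) ^ 2 := by
      rw [hD, Matrix.diagonal_mul_diagonal]
      congr 1; funext i; simp [sq]
    rw [this, Matrix.trace_diagonal]
    simp [← Complex.ofReal_pow]
  rw [htrsq, hDD]
  calc ∑ i, (hH.eigenvalues i) ^ 2 ≤ ∑ i, hH.eigenvalues i := by
        refine Finset.sum_le_sum fun i _ => ?_
        have h1 : hH.eigenvalues i ≤ 1 := by
          rw [← hsum]
          exact Finset.single_le_sum (fun j _ => hnn j) (Finset.mem_univ i)
        nlinarith [hnn i]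
    _ = 1 := hsum


theorem avg_abs_bloch_coeff_le {m : ℕ} (σ : Matrix (Fin m → Fin 2) (Fin m → Fin 2) ℂ)
    (hpos : σ.PosSemidef) (htr : σ.trace = 1) :
    (1 / 3 ^ m : ℝ) *
        ∑ y : Fin m → Fin 3, |(Matrix.trace (pauliT (fun i => (y i).succ) * σ)).re|
      ≤ (2 / 3 : ℝ) ^ ((m : ℝ) / 2) := by
  set t : (Fin m → Fin 4) → ℝ := fun y => ((pauliT y * σ).trace).re with ht
  -- Step 1 : sum of squares over all Pauli strings
  have hkey := pauli_key σ σ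
  have hre : ∀ y : Fin m → Fin 4,
      (pauliT y * σ).trace * (pauliT y * σ).trace = ((t y ^ 2 : ℝ) : ℂ) := by
    intro y
    rw [← trace_pauliT_real hpos.1 y]
    push_cast
    ring
  have hsumsq : ∑ y : Fin m → Fin 4, t y ^ 2 ≤ (2 : ℝ) ^ m := by
    simp_rw [hre] at hkey
    have h2 := congrArg Complex.re hkey
    rw [show ((2 : ℂ) ^ m) = (((2 : ℝ) ^ m : ℝ) : ℂ) by push_cast; ring] at h2
    rw [Complex.re_ofReal_mul] at h2
    have h3 : (∑ y : Fin m → Fin 4, ((t y ^ 2 : ℝ) : ℂ)).re = ∑ y : Fin m → Fin 4, t y ^ 2 := by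
      rw [Complex.re_sum]
      exact Finset.sum_congr rfl fun y _ => Complex.ofReal_re _
    rw [h3] at h2
    have h4 := trace_sq_le_one hpos htr
    have h5 : (0:ℝ) < 2 ^ m := by positivity
    nlinarith
  -- Step 2 : restrict to the 3^m strings with no identity
  set e : (Fin m → Fin 3) → (Fin m → Fin 4) := fun y i => (y i).succ with he
  have hinj : Function.Injective e := fun a b h =>
    funext fun i => Fin.succ_injective _ (congrFun h i)
  have hsub : ∑ y : Fin m → Fin 3, t (e y) ^ 2 ≤ ∑ y : Fin m → Fin 4, t y ^ 2 := by
    rw [← Finset.sum_image (f := fun y => t y ^ 2) (g := e)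
      (fun x _ y _ hxy => hinj hxy)]
    exact Finset.sum_le_sum_of_subset_of_nonneg (Finset.subset_univ _)
      (fun i _ _ => sq_nonneg _)
  -- Step 3 : Cauchy–Schwarz
  have hcs := Finset.sum_mul_sq_le_sq_mul_sq Finset.univ
    (fun _ : Fin m → Fin 3 => (1 : ℝ)) (fun y => |t (e y)|)
  simp only [one_mul, one_pow, sq_abs, Finset.sum_const, Finset.card_univ,
    nsmul_eq_mul, mul_one] at hcs
  have hcard : (Fintype.card (Fin m → Fin 3) : ℝ) = 3 ^ m := by
    simp [Fintype.card_fun]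
  rw [hcard] at hcs
  set S : ℝ := ∑ y : Fin m → Fin 3, |t (e y)| with hS
  have hS2 : S ^ 2 ≤ 6 ^ m := by
    calc S ^ 2 ≤ 3 ^ m * ∑ y : Fin m → Fin 3, t (e y) ^ 2 := hcs
      _ ≤ 3 ^ m * 2 ^ m := by
          have : (0:ℝ) ≤ 3 ^ m := by positivity
          nlinarith [hsub, hsumsq]
      _ = 6 ^ m := by rw [← mul_pow]; norm_num
  -- Step 4 : conclude
  set R : ℝ := (3 : ℝ) ^ m * (2 / 3 : ℝ) ^ ((m : ℝ) / 2) with hR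
  have hRnn : 0 ≤ R := by positivity
  have hR2 : R ^ 2 = 6 ^ m := by
    rw [hR, mul_pow, ← Real.rpow_natCast ((2/3 : ℝ) ^ ((m:ℝ)/2)) 2,
      ← Real.rpow_mul (by norm_num)]
    norm_num
    rw [pow_right_comm, ← mul_pow]
    norm_num
  have hSR : S ≤ R := by
    have hSnn : 0 ≤ S := Finset.sum_nonneg fun y _ => abs_nonneg _
    nlinarith [hS2, hR2]
  have h3m : (0:ℝ) < 3 ^ m := by positivity
  calc (1 / 3 ^ m : ℝ) * ∑ y : Fin m → Fin 3,
          |(Matrix.trace (pauliT (fun i => (y i).succ) * σ)).re|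
      = (1 / 3 ^ m : ℝ) * S := rfl
    _ ≤ (1 / 3 ^ m : ℝ) * R := by
        apply mul_le_mul_of_nonneg_left hSR
        positivity
    _ = (2 / 3 : ℝ) ^ ((m : ℝ) / 2) := by
        rw [hR]
        field_simp
end

section
/- Let ρ_{VE} = Σ_v P(v)|v⟩⟨v| ⊗ ρ_v be a classical-quantum state such that the reduced state ρ_E = Σ_v P(v)ρ_v is the completely mixed state on a d-dimensional system E. Then N := {d·P(v)·ρ_v}_v is a valid POVM on E, and for any POVM M = {M_z} measured on E with outcome Z, the conditional Shannon entropy satisfies H(V|Z) ≥ min_σ H(N[σ]), where the minimum is over all density matrices σ and H(N[σ]) is the Shannon entropy of the distribution v ↦ d·P(v)·tr(ρ_v σ). -/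
open Matrix BigOperators
open scoped ComplexOrder

/-- Shannon entropy (base 2) of a distribution on a finite type. -/
noncomputable def shEnt {α : Type*} [Fintype α] (p : α → ℝ) : ℝ :=
  -∑ a, p a * Real.logb 2 (p a)

namespace PGEB

lemma trace_nonneg {n : Type*} [Fintype n] [DecidableEq n] {A : Matrix n n ℂ}
    (hA : A.PosSemidef) : 0 ≤ A.trace := by
  rw [Matrix.trace]
  refine Finset.sum_nonneg fun i _ => ?_
  have := hA.dotProduct_mulVec_nonneg (Pi.single i 1)
  simpa [dotProduct, Matrix.mulVec, Pi.single_apply, Finset.mul_sum] using this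

lemma smul_psd {n : Type*} [Fintype n] [DecidableEq n] {A : Matrix n n ℂ}
    (hA : A.PosSemidef) (c : ℝ) (hc : 0 ≤ c) : ((c:ℂ) • A).PosSemidef := by
  refine Matrix.PosSemidef.of_dotProduct_mulVec_nonneg ?_ ?_
  · unfold Matrix.IsHermitian
    rw [Matrix.conjTranspose_smul, hA.1.eq, Complex.star_def, Complex.conj_ofReal]
  · intro x
    rw [Matrix.smul_mulVec, dotProduct_smul, smul_eq_mul]
    exact mul_nonneg (by exact_mod_cast hc) (hA.dotProduct_mulVec_nonneg x)

open scoped MatrixOrder in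
lemma trace_mul_nonneg {n : Type*} [Fintype n] [DecidableEq n] {A B : Matrix n n ℂ}
    (hA : A.PosSemidef) (hB : B.PosSemidef) : 0 ≤ (A * B).trace := by
  have h1 : B = CFC.sqrt B * CFC.sqrt B := (CFC.sqrt_mul_sqrt_self B hB.nonneg).symm
  have h1' : A * B = A * (CFC.sqrt B * CFC.sqrt B) := by rw [← h1]
  have h2 : (A * B).trace = (CFC.sqrt B * A * CFC.sqrt B).trace := by
    rw [h1', ← Matrix.mul_assoc, Matrix.trace_mul_comm, Matrix.mul_assoc]
  rw [h2]
  have h3 : (CFC.sqrt B * A * CFC.sqrt B).PosSemidef := by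
    have := hA.conjTranspose_mul_mul_same (CFC.sqrt B)
    rwa [(CFC.sqrt_nonneg B).posSemidef.1.eq] at this
  exact trace_nonneg h3

lemma trace_mul_re_nonneg {n : Type*} [Fintype n] [DecidableEq n] {A B : Matrix n n ℂ}
    (hA : A.PosSemidef) (hB : B.PosSemidef) : 0 ≤ ((A * B).trace).re :=
  (Complex.le_def.mp (trace_mul_nonneg hA hB)).1

lemma trace_eq_re {n : Type*} [Fintype n] [DecidableEq n] {A : Matrix n n ℂ}
    (hA : A.PosSemidef) : A.trace = (A.trace.re : ℂ) := by
  have him := (Complex.le_def.mp (trace_nonneg hA)).2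
  simp only [Complex.zero_im] at him
  apply Complex.ext <;> simp [← him]

/-- chain rule term identity -/
lemma term_eq {V : Type*} [Fintype V] (f : V → ℝ) (hf : ∀ v, 0 ≤ f v)
    (hq : (∑ v, f v) ≠ 0) :
    (-∑ v, f v * Real.logb 2 (f v)) + (∑ v, f v) * Real.logb 2 (∑ v, f v)
      = (∑ v, f v) * shEnt (fun v => f v / (∑ v, f v)) := by
  set q := ∑ v, f v with hqdef
  rw [shEnt, mul_neg, Finset.mul_sum]
  have : ∀ v ∈ Finset.univ, q * (f v / q * Real.logb 2 (f v / q))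
      = f v * Real.logb 2 (f v) - f v * Real.logb 2 q := by
    intro v _
    rcases eq_or_ne (f v) 0 with h | h
    · simp [h]
    · rw [Real.logb_div h hq]
      field_simp
  rw [Finset.sum_congr rfl this, Finset.sum_sub_distrib, ← Finset.sum_mul]
  ring

lemma shEnt_nonneg {V : Type*} [Fintype V] (g : V → ℝ) (h0 : ∀ v, 0 ≤ g v)
    (h1 : ∀ v, g v ≤ 1) : 0 ≤ shEnt g := by
  rw [shEnt, neg_nonneg]
  refine Finset.sum_nonpos fun v _ => ?_
  exact mul_nonpos_of_nonneg_of_nonpos (h0 v)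
    (Real.logb_nonpos one_lt_two (h0 v) (h1 v))

end PGEB

theorem pretty_good_entropy_bound {V Z : Type*} [Fintype V] [Fintype Z] {d : ℕ}
    (P : V → ℝ) (hP : ∀ v, 0 ≤ P v) (hP1 : ∑ v, P v = 1)
    (ρ : V → Matrix (Fin d) (Fin d) ℂ)
    (hρpos : ∀ v, (ρ v).PosSemidef) (hρtr : ∀ v, (ρ v).trace = 1)
    (hmix : ∑ v, P v • ρ v = ((d : ℂ))⁻¹ • 1)
    (M : Z → Matrix (Fin d) (Fin d) ℂ)
    (hMpos : ∀ z, (M z).PosSemidef) (hMsum : ∑ z, M z = 1) :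
    -- the operators `d · P(v) · ρ_v` form a POVM
    ((∀ v, (((d : ℂ) * P v) • ρ v).PosSemidef) ∧
      ∑ v, ((d : ℂ) * P v) • ρ v = 1) ∧
    -- `H(V|Z) = H(VZ) - H(Z) ≥ inf_σ H(N[σ])`, inf over density matrices σ
    shEnt (fun vz : V × Z => P vz.1 * (Matrix.trace (M vz.2 * ρ vz.1)).re)
        - shEnt (fun z : Z => ∑ v, P v * (Matrix.trace (M z * ρ v)).re)
      ≥ sInf {h : ℝ | ∃ σ : Matrix (Fin d) (Fin d) ℂ, σ.PosSemidef ∧ σ.trace = 1 ∧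
          h = shEnt (fun v : V => d * P v * (Matrix.trace (ρ v * σ)).re)} := by
  -- V is nonempty
  have hVne : Nonempty V := by
    by_contra h
    rw [not_nonempty_iff] at h
    simp [Finset.sum_empty] at hP1
  obtain ⟨v0⟩ := hVne
  -- d ≠ 0
  have hd0 : d ≠ 0 := by
    intro h
    subst h
    have := hρtr v0
    simp [Matrix.trace] at this
  have hdpos : (0:ℝ) < d := by exact_mod_cast Nat.pos_of_ne_zero hd0
  have hdC : (d:ℂ) ≠ 0 := by exact_mod_cast hd0
  -- real smul = complex smul
  have hsmul : ∀ (r : ℝ) (A : Matrix (Fin d) (Fin d) ℂ), r • A = ((r:ℂ)) • A := by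
    intro r A
    ext i j
    simp [Matrix.smul_apply, Complex.real_smul]
  -- POVM part
  have povm : (∀ v, (((d : ℂ) * P v) • ρ v).PosSemidef) ∧
      ∑ v, ((d : ℂ) * P v) • ρ v = 1 := by
    constructor
    · intro v
      have : ((d:ℂ) * P v) = ((d * P v : ℝ) : ℂ) := by push_cast; ring
      rw [this]
      exact PGEB.smul_psd (hρpos v) _ (mul_nonneg (Nat.cast_nonneg d) (hP v))
    · have : ∀ v, ((d:ℂ) * P v) • ρ v = (d:ℂ) • (P v • ρ v) := by
        intro v
        rw [hsmul (P v), smul_smul]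
      rw [Finset.sum_congr rfl fun v _ => this v, ← Finset.smul_sum, hmix, smul_smul,
        mul_inv_cancel₀ hdC, one_smul]
  refine ⟨povm, ?_⟩
  -- notation
  set p : V × Z → ℝ := fun vz => P vz.1 * (Matrix.trace (M vz.2 * ρ vz.1)).re with hp
  set q : Z → ℝ := fun z => ∑ v, P v * (Matrix.trace (M z * ρ v)).re with hq
  set S := {h : ℝ | ∃ σ : Matrix (Fin d) (Fin d) ℂ, σ.PosSemidef ∧ σ.trace = 1 ∧
          h = shEnt (fun v : V => d * P v * (Matrix.trace (ρ v * σ)).re)} with hS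
  -- key weighted trace identity
  have key : ∀ A : Matrix (Fin d) (Fin d) ℂ,
      ∑ v, P v * ((A * ρ v).trace).re = (d:ℝ)⁻¹ * (A.trace).re := by
    intro A
    have h1 : ∑ v, (P v:ℂ) * (A * ρ v).trace = (d:ℂ)⁻¹ * A.trace := by
      calc ∑ v, (P v:ℂ) * (A * ρ v).trace
          = ∑ v, (A * (P v • ρ v)).trace := by
            refine Finset.sum_congr rfl fun v _ => ?_
            rw [hsmul (P v), Matrix.mul_smul, Matrix.trace_smul, smul_eq_mul]
        _ = (A * ∑ v, P v • ρ v).trace := by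
            rw [Matrix.mul_sum, Matrix.trace_sum]
        _ = (d:ℂ)⁻¹ * A.trace := by
            rw [hmix, Matrix.mul_smul, Matrix.trace_smul, smul_eq_mul, Matrix.mul_one]
    have h2 : (∑ v, (P v:ℂ) * (A * ρ v).trace).re = ∑ v, P v * ((A * ρ v).trace).re := by
      rw [Complex.re_sum]
      exact Finset.sum_congr rfl fun v _ => by simp [Complex.mul_re]
    rw [← h2, h1]
    have h3 : (d:ℂ)⁻¹ = (((d:ℝ)⁻¹ : ℝ) : ℂ) := by push_cast; ring
    rw [h3]
    simp [Complex.mul_re]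
  -- nonnegativity of p
  have hp0 : ∀ vz : V × Z, 0 ≤ p vz := fun vz =>
    mul_nonneg (hP _) (PGEB.trace_mul_re_nonneg (hMpos _) (hρpos _))
  have hq0 : ∀ z, 0 ≤ q z := fun z =>
    Finset.sum_nonneg fun v _ => hp0 (v, z)
  -- q z in terms of trace of M z
  have hqtr : ∀ z, q z = (d:ℝ)⁻¹ * ((M z).trace).re := fun z => key (M z)
  -- sum of q is 1
  have hqsum : ∑ z, q z = 1 := by
    have : ∑ z, q z = (d:ℝ)⁻¹ * ((1 : Matrix (Fin d) (Fin d) ℂ).trace).re := by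
      rw [Finset.sum_congr rfl fun z _ => hqtr z, ← Finset.mul_sum]
      congr 1
      rw [← hMsum, Matrix.trace_sum, Complex.re_sum]
    rw [this, Matrix.trace_one]
    simp only [Complex.natCast_re, Fintype.card_fin]
    exact inv_mul_cancel₀ hdpos.ne'
  -- S is bounded below by 0
  have hSbdd : BddBelow S := by
    refine ⟨0, fun h hh => ?_⟩
    obtain ⟨σ, hσpos, hσtr, rfl⟩ := hh
    have hg0 : ∀ v, 0 ≤ (d:ℝ) * P v * ((ρ v * σ).trace).re := fun v =>
      mul_nonneg (mul_nonneg hdpos.le (hP v)) (PGEB.trace_mul_re_nonneg (hρpos v) hσpos)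
    have hgsum : ∑ v, (d:ℝ) * P v * ((ρ v * σ).trace).re = 1 := by
      have : ∀ v, (d:ℝ) * P v * ((ρ v * σ).trace).re
          = (d:ℝ) * (P v * ((σ * ρ v).trace).re) := by
        intro v; rw [Matrix.trace_mul_comm]; ring
      rw [Finset.sum_congr rfl fun v _ => this v, ← Finset.mul_sum, key σ, hσtr]
      simp only [Complex.one_re, mul_one]
      exact mul_inv_cancel₀ hdpos.ne'
    refine PGEB.shEnt_nonneg _ hg0 fun v => ?_
    calc (d:ℝ) * P v * ((ρ v * σ).trace).re
        ≤ ∑ w, (d:ℝ) * P w * ((ρ w * σ).trace).re :=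
          Finset.single_le_sum (fun w _ => hg0 w) (Finset.mem_univ v)
      _ = 1 := hgsum
  -- rewrite the LHS as a sum over z
  have hLHS : shEnt p - shEnt q
      = ∑ z, ((-∑ v, p (v, z) * Real.logb 2 (p (v, z))) + q z * Real.logb 2 (q z)) := by
    rw [shEnt, shEnt, Fintype.sum_prod_type, Finset.sum_comm]
    rw [Finset.sum_add_distrib]
    rw [← Finset.sum_neg_distrib]
    ring
  rw [hLHS]
  -- bound each term
  have hterm : ∀ z, q z * sInf S
      ≤ (-∑ v, p (v, z) * Real.logb 2 (p (v, z))) + q z * Real.logb 2 (q z) := by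
    intro z
    rcases eq_or_ne (q z) 0 with h0 | h0
    · have hzero : ∀ v, p (v, z) = 0 := by
        intro v
        have := Finset.sum_eq_zero_iff_of_nonneg (fun v _ => hp0 (v, z)) |>.mp h0
        exact this v (Finset.mem_univ v)
      simp [h0, hzero]
    · have hqpos : 0 < q z := lt_of_le_of_ne (hq0 z) (Ne.symm h0)
      -- the conditional distribution comes from a density matrix
      have htpos : 0 < ((M z).trace).re := by
        by_contra hcon
        push_neg at hcon
        have : q z ≤ 0 := by
          rw [hqtr z]
          exact mul_nonpos_of_nonneg_of_nonpos (by positivity) hcon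
        linarith
      set t := ((M z).trace).re with ht
      set σ := ((t⁻¹ : ℝ) : ℂ) • M z with hσ
      have hσpos : σ.PosSemidef := PGEB.smul_psd (hMpos z) _ (by positivity)
      have hσtr : σ.trace = 1 := by
        rw [hσ, Matrix.trace_smul, smul_eq_mul, PGEB.trace_eq_re (hMpos z), ← ht]
        rw [← Complex.ofReal_mul]
        rw [inv_mul_cancel₀ htpos.ne']
        simp
      have hmem : shEnt (fun v => p (v, z) / q z) ∈ S := by
        refine ⟨σ, hσpos, hσtr, ?_⟩
        congr 1
        funext v
        have h1 : (ρ v * σ).trace = ((t⁻¹ : ℝ) : ℂ) * (M z * ρ v).trace := by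
          rw [hσ, Matrix.mul_smul, Matrix.trace_smul, smul_eq_mul, Matrix.trace_mul_comm]
        rw [h1]
        simp only [hp, hq]
        simp only [Complex.mul_re, Complex.ofReal_re, Complex.ofReal_im, zero_mul, sub_zero]
        rw [show (∑ w, P w * (M z * ρ w).trace.re) = (d:ℝ)⁻¹ * t from hqtr z]
        field_simp
      have hle : sInf S ≤ shEnt (fun v => p (v, z) / q z) := csInf_le hSbdd hmem
      calc q z * sInf S ≤ q z * shEnt (fun v => p (v, z) / q z) := by
            exact mul_le_mul_of_nonneg_left hle (hq0 z)
        _ = (-∑ v, p (v, z) * Real.logb 2 (p (v, z))) + q z * Real.logb 2 (q z) := by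
            rw [← PGEB.term_eq (fun v => p (v, z)) (fun v => hp0 (v, z)) h0]
  calc sInf S = (∑ z, q z) * sInf S := by rw [hqsum, one_mul]
    _ = ∑ z, q z * sInf S := by rw [Finset.sum_mul]
    _ ≤ _ := Finset.sum_le_sum fun z _ => hterm z
end
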